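/- (Robustness of TVA) If g_0 ≥ OPT_1, then TVA_1 ≥ E[max_t v_t] − g_0. -/

import Mathlib

open MeasureTheory ProbabilityTheory

lemma tva_max_sub_max_le (a b c c' : ℝ) (h : c' ≤ c) :
    max (max a b - c) 0 ≤ max (a - c') 0 + max (b - c') 0 := by
  have l1 := le_max_left (a - c') (0:ℝ); have l2 := le_max_right (a - c') (0:ℝ)
  have l3 := le_max_left (b - c') (0:ℝ); have l4 := le_max_right (b - c') (0:ℝ)
  rcases max_cases (max a b - c) (0:ℝ) with ⟨hf, _⟩ | ⟨hf, _⟩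
  · rw [hf]; rcases max_cases a b with ⟨he, _⟩ | ⟨he, _⟩ <;> rw [he] <;> linarith
  · rw [hf]; linarith

/-- Robustness of TVA: if `g 0 ≥ OPT 1` then
`TVA 1 ≥ E[max_t v t] − g 0`. -/
theorem tva_robustness
    {Ω : Type*} [MeasureSpace Ω] [IsProbabilityMeasure (ℙ : Measure Ω)]
    (n : ℕ) (v : ℕ → Ω → ℝ)
    (hmeas : ∀ i, Measurable (v i))
    (hnn : ∀ i ω, 0 ≤ v i ω)
    (hint : ∀ i, Integrable (v i))
    (hindep : iIndepFun v ℙ)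
    (OPT : ℕ → ℝ)
    (hOPTlast : OPT (n + 1) = 0)
    (hOPTrec : ∀ t ∈ Finset.Icc 1 n, OPT t = ∫ ω, max (v t ω) (OPT (t + 1)))
    (g : ℕ → ℝ)
    (hg0nn : 0 ≤ g 0) (hg0 : OPT 1 ≤ g 0)
    (hgrec : ∀ t ∈ Finset.Icc 1 n,
      IsLeast {x : ℝ | 0 ≤ x ∧ g (t - 1) ≤ ∫ ω, max (v t ω) x} (g t))
    (TVA : ℕ → ℝ)
    (hTVAlast : TVA (n + 1) = 0)
    (hTVArec : ∀ t ∈ Finset.Icc 1 n,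
      TVA t = (∫ ω, Set.indicator {ω | g t ≤ v t ω} (v t) ω)
        + (ℙ {ω | v t ω < g t}).toReal * TVA (t + 1)) :
    TVA 1 ≥ (∫ ω, ⨆ i ∈ Finset.Icc 1 n, v i ω) - g 0 := by
  classical
  set Y : ℕ → Ω → ℝ := fun t ω => ⨆ i ∈ Finset.Icc t n, v i ω with hYdef
  -- basic facts about the running maximum `Y`
  have hbdd : ∀ (s : Finset ℕ) (ω : Ω), BddAbove (Set.range fun i => ⨆ _ : i ∈ s, v i ω) := by
    intro s ω
    refine ⟨∑ i ∈ s, v i ω, ?_⟩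
    rintro x ⟨i, rfl⟩
    dsimp only
    by_cases h : i ∈ s
    · rw [ciSup_pos h]
      exact Finset.single_le_sum (fun j _ => hnn j ω) h
    · haveI : IsEmpty (i ∈ s) := ⟨fun hh => h hh⟩
      rw [Real.iSup_of_isEmpty]
      exact Finset.sum_nonneg fun j _ => hnn j ω
  have hle : ∀ (s : Finset ℕ) (ω : Ω) (i : ℕ), i ∈ s → v i ω ≤ ⨆ j ∈ s, v j ω := by
    intro s ω i hi
    have h := le_ciSup (hbdd s ω) i
    rwa [ciSup_pos hi] at h
  have hsupnn : ∀ (s : Finset ℕ) (ω : Ω), 0 ≤ ⨆ j ∈ s, v j ω := by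
    intro s ω
    have h0 := le_ciSup (hbdd s ω) 0
    by_cases h : 0 ∈ s
    · rw [ciSup_pos h] at h0; exact (hnn 0 ω).trans h0
    · haveI : IsEmpty (0 ∈ s) := ⟨fun hh => h hh⟩
      rwa [Real.iSup_of_isEmpty] at h0
  have hsuple : ∀ (s : Finset ℕ) (ω : Ω) (B : ℝ), 0 ≤ B → (∀ i ∈ s, v i ω ≤ B) →
      (⨆ j ∈ s, v j ω) ≤ B := by
    intro s ω B hB h
    refine ciSup_le fun i => ?_
    by_cases hi : i ∈ s
    · rw [ciSup_pos hi]; exact h i hi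
    · haveI : IsEmpty (i ∈ s) := ⟨fun hh => hi hh⟩
      rw [Real.iSup_of_isEmpty]; exact hB
  have hYtop : ∀ ω, Y (n+1) ω = 0 := by
    intro ω
    refine le_antisymm (hsuple _ ω 0 le_rfl ?_) (hsupnn _ ω)
    intro i hi
    rw [Finset.mem_Icc] at hi; omega
  have hYrec : ∀ t, 1 ≤ t → t ≤ n → ∀ ω, Y t ω = max (v t ω) (Y (t+1) ω) := by
    intro t h1 h2 ω
    refine le_antisymm ?_ ?_
    · refine hsuple _ ω _ (le_max_of_le_right (hsupnn _ ω)) ?_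
      intro i hi
      rw [Finset.mem_Icc] at hi
      rcases eq_or_lt_of_le hi.1 with rfl | hlt
      · exact le_max_left _ _
      · exact le_max_of_le_right (hle _ ω i (Finset.mem_Icc.mpr ⟨hlt, hi.2⟩))
    · refine max_le (hle _ ω t (Finset.mem_Icc.mpr ⟨le_rfl, h2⟩)) (hsuple _ ω _ (hsupnn _ ω) ?_)
      intro i hi
      rw [Finset.mem_Icc] at hi
      exact hle _ ω i (Finset.mem_Icc.mpr ⟨by omega, hi.2⟩)
  -- integrability helper
  have hIntmax : ∀ (f : Ω → ℝ), Integrable f → ∀ (c c' : ℝ),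
      Integrable (fun ω => max (f ω - c) c') := by
    intro f hf c c'
    exact (hf.sub (integrable_const c)).sup (integrable_const c')
  have hIntmaxc : ∀ (f : Ω → ℝ), Integrable f → ∀ (c : ℝ),
      Integrable (fun ω => max (f ω) c) := by
    intro f hf c
    exact hf.sup (integrable_const c)
  -- splitting lemma: ∫ max(f, c) = c + ∫ (f − c)⁺
  have hsplit : ∀ (f : Ω → ℝ), Integrable f → ∀ (c : ℝ),
      (∫ ω, max (f ω) c) = c + ∫ ω, max (f ω - c) 0 := by
    intro f hf c
    have hfun : (fun ω => max (f ω) c) = fun ω => c + max (f ω - c) 0 := by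
      funext ω
      rcases le_total c (f ω) with h | h
      · rw [max_eq_left h, max_eq_left (by linarith)]; ring
      · rw [max_eq_right h, max_eq_right (by linarith)]; ring
    rw [hfun, integral_add (integrable_const c) (hIntmax f hf c 0), integral_const]
    simp
  have hgnn : ∀ s, s ≤ n → 0 ≤ g s := by
    intro s hs
    rcases Nat.eq_zero_or_pos s with rfl | h
    · exact hg0nn
    · exact ((hgrec s (Finset.mem_Icc.mpr ⟨h, hs⟩)).1).1
  -- the main downward induction
  have main : ∀ k t, t + k = n + 1 → 1 ≤ t →
      Integrable (Y t) ∧ 0 ≤ OPT t ∧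
      (∫ ω, max (Y t ω - OPT t) 0) ≤ OPT t ∧
      min (g (t-1)) (∫ ω, max (Y t ω - g (t-1)) 0) ≤ TVA t := by
    intro k
    induction k with
    | zero =>
      intro t ht _
      have htt : t = n + 1 := by omega
      subst htt
      have hY0 : Y (n+1) = fun _ => (0:ℝ) := funext hYtop
      have hgn : (0:ℝ) ≤ g (n + 1 - 1) := by
        simpa using hgnn n le_rfl
      refine ⟨?_, ?_, ?_, ?_⟩
      · rw [hY0]; exact integrable_const 0
      · rw [hOPTlast]
      · rw [hY0, hOPTlast]; simp
      · rw [hY0, hTVAlast]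
        have : (∫ (_ : Ω), max (0 - g (n + 1 - 1)) 0) = 0 := by
          rw [max_eq_right (by linarith)]; simp
        rw [this]
        exact min_le_of_right_le le_rfl
    | succ k ih =>
      intro t ht h1
      have htn : t ≤ n := by omega
      obtain ⟨ihInt, ihOPT, ihC, ihE⟩ := ih (t+1) (by omega) (by omega)
      simp only [Nat.add_sub_cancel] at ihE
      have htmem : t ∈ Finset.Icc 1 n := Finset.mem_Icc.mpr ⟨h1, htn⟩
      have hYfun : Y t = fun ω => max (v t ω) (Y (t+1) ω) := funext (hYrec t h1 htn)
      have hIntYt : Integrable (Y t) := by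
        rw [hYfun]; exact (hint t).sup ihInt
      -- OPT facts
      have hOPTt : OPT t = ∫ ω, max (v t ω) (OPT (t+1)) := hOPTrec t htmem
      have hOPTge : OPT (t+1) ≤ OPT t := by
        rw [hOPTt]
        calc OPT (t+1) = ∫ (_ : Ω), OPT (t+1) := by simp
          _ ≤ ∫ ω, max (v t ω) (OPT (t+1)) :=
              integral_mono (integrable_const _) (hIntmaxc _ (hint t) _)
                (fun ω => le_max_right _ _)
      have hOPTnn : 0 ≤ OPT t := ihOPT.trans hOPTge
      -- claim (c): E[(Y t − OPT t)⁺] ≤ OPT t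
      have hC : (∫ ω, max (Y t ω - OPT t) 0) ≤ OPT t := by
        have hpt : ∀ ω, max (Y t ω - OPT t) 0 ≤
            max (v t ω - OPT (t+1)) 0 + max (Y (t+1) ω - OPT (t+1)) 0 := by
          intro ω
          rw [hYrec t h1 htn ω]
          exact tva_max_sub_max_le _ _ _ _ hOPTge
        calc (∫ ω, max (Y t ω - OPT t) 0)
            ≤ ∫ ω, (max (v t ω - OPT (t+1)) 0 + max (Y (t+1) ω - OPT (t+1)) 0) :=
              integral_mono (hIntmax _ hIntYt _ 0)
                ((hIntmax _ (hint t) _ 0).add (hIntmax _ ihInt _ 0)) hpt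
          _ = (∫ ω, max (v t ω - OPT (t+1)) 0) + ∫ ω, max (Y (t+1) ω - OPT (t+1)) 0 :=
              integral_add (hIntmax _ (hint t) _ 0) (hIntmax _ ihInt _ 0)
          _ ≤ (∫ ω, max (v t ω - OPT (t+1)) 0) + OPT (t+1) := by linarith
          _ = OPT t := by rw [hOPTt, hsplit _ (hint t) (OPT (t+1))]; ring
      -- claim (e)
      have hgt := hgrec t htmem
      have hGnn : 0 ≤ g t := hgt.1.1
      have hG'nn : 0 ≤ g (t-1) := hgnn (t-1) (by omega)
      have hfeas : g (t-1) ≤ ∫ ω, max (v t ω) (g t) := hgt.1.2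
      have hGle : g t ≤ g (t-1) := by
        refine hgt.2 ⟨hG'nn, ?_⟩
        rw [hsplit _ (hint t) (g (t-1))]
        have : (0:ℝ) ≤ ∫ ω, max (v t ω - g (t-1)) 0 :=
          integral_nonneg fun ω => le_max_right _ _
        linarith
      have hS : MeasurableSet {ω : Ω | g t ≤ v t ω} := measurableSet_le measurable_const (hmeas t)
      have hcompl : {ω : Ω | v t ω < g t} = {ω : Ω | g t ≤ v t ω}ᶜ := by
        ext ω; simp [not_le]
      set q := (ℙ {ω : Ω | g t ≤ v t ω}).toReal with hq
      set p := (ℙ {ω : Ω | v t ω < g t}).toReal with hp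
      have hqnn : 0 ≤ q := ENNReal.toReal_nonneg
      have hpnn : 0 ≤ p := ENNReal.toReal_nonneg
      have hpq : q + p = 1 := by
        rw [hq, hp, hcompl, ← ENNReal.toReal_add (measure_ne_top _ _) (measure_ne_top _ _),
          measure_add_measure_compl hS, measure_univ, ENNReal.toReal_one]
      have hA : (∫ ω, Set.indicator {ω : Ω | g t ≤ v t ω} (v t) ω)
          = q * g t + ∫ ω, max (v t ω - g t) 0 := by
        have hfun : (fun ω => Set.indicator {ω : Ω | g t ≤ v t ω} (v t) ω)
            = fun ω => Set.indicator {ω : Ω | g t ≤ v t ω} (fun _ => g t) ω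
              + max (v t ω - g t) 0 := by
          funext ω
          simp only [Set.indicator_apply]
          by_cases h : ω ∈ {ω : Ω | g t ≤ v t ω}
          · have h' : g t ≤ v t ω := h
            rw [if_pos h, if_pos h, max_eq_left (by linarith)]
            ring
          · have h' : ¬ g t ≤ v t ω := h
            rw [if_neg h, if_neg h, max_eq_right (by push_neg at h'; linarith)]
            ring
        rw [hfun, integral_add ((integrable_const (g t)).indicator hS) (hIntmax _ (hint t) _ 0),
          integral_indicator hS, setIntegral_const, smul_eq_mul, measureReal_def]
      have hTVAt := hTVArec t htmem
      set B := ∫ ω, max (Y (t+1) ω - g t) 0 with hB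
      have hBnn : 0 ≤ B := integral_nonneg fun ω => le_max_right _ _
      have hEv : (0:ℝ) ≤ ∫ ω, max (v t ω - g t) 0 :=
        integral_nonneg fun ω => le_max_right _ _
      have key : q * g t + (∫ ω, max (v t ω - g t) 0) + p * min (g t) B ≤ TVA t := by
        rw [hTVAt, hA]
        have := mul_le_mul_of_nonneg_left ihE hpnn
        linarith
      have hE : min (g (t-1)) (∫ ω, max (Y t ω - g (t-1)) 0) ≤ TVA t := by
        rcases le_total (g t) B with hcase | hcase
        · refine min_le_of_left_le ?_
          rw [min_eq_left hcase] at key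
          have h2 : g (t-1) ≤ g t + ∫ ω, max (v t ω - g t) 0 := by
            rw [← hsplit _ (hint t) (g t)]; exact hfeas
          nlinarith [hpq, hGnn]
        · refine min_le_of_right_le ?_
          rw [min_eq_right hcase] at key
          have h3 : q * B ≤ q * g t := mul_le_mul_of_nonneg_left hcase hqnn
          have h4 : B + (∫ ω, max (v t ω - g t) 0) ≤ TVA t := by nlinarith [hpq]
          have hpt : ∀ ω, max (Y t ω - g (t-1)) 0 ≤
              max (v t ω - g t) 0 + max (Y (t+1) ω - g t) 0 := by
            intro ω
            rw [hYrec t h1 htn ω]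
            exact tva_max_sub_max_le _ _ _ _ hGle
          have h5 : (∫ ω, max (Y t ω - g (t-1)) 0)
              ≤ (∫ ω, max (v t ω - g t) 0) + B := by
            calc (∫ ω, max (Y t ω - g (t-1)) 0)
                ≤ ∫ ω, (max (v t ω - g t) 0 + max (Y (t+1) ω - g t) 0) :=
                  integral_mono (hIntmax _ hIntYt _ 0)
                    ((hIntmax _ (hint t) _ 0).add (hIntmax _ ihInt _ 0)) hpt
              _ = (∫ ω, max (v t ω - g t) 0) + B :=
                  integral_add (hIntmax _ (hint t) _ 0) (hIntmax _ ihInt _ 0)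
          linarith
      exact ⟨hIntYt, hOPTnn, hC, hE⟩
  -- assemble
  obtain ⟨hIntY1, hOPT1nn, hC1, hE1⟩ := main n 1 (by omega) le_rfl
  have hgoal : (∫ ω, Y 1 ω) - g 0 ≤ TVA 1 := by
    have h2g : (∫ ω, Y 1 ω) ≤ g 0 + g 0 := by
      have hpt : ∀ ω, Y 1 ω ≤ OPT 1 + max (Y 1 ω - OPT 1) 0 := by
        intro ω
        have := le_max_left (Y 1 ω - OPT 1) (0:ℝ)
        linarith
      have step : (∫ ω, Y 1 ω) ≤ ∫ ω, (OPT 1 + max (Y 1 ω - OPT 1) 0) :=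
        integral_mono hIntY1 ((integrable_const _).add (hIntmax _ hIntY1 _ 0)) hpt
      rw [integral_add (integrable_const _) (hIntmax _ hIntY1 _ 0), integral_const] at step
      simp only [probReal_univ, one_smul] at step
      linarith [hC1]
    have h3 : (∫ ω, Y 1 ω) - g 0 ≤ ∫ ω, max (Y 1 ω - g 0) 0 := by
      have heq : (∫ ω, Y 1 ω) - g 0 = ∫ ω, (Y 1 ω - g 0) := by
        rw [integral_sub hIntY1 (integrable_const _), integral_const]
        simp
      rw [heq]
      exact integral_mono (hIntY1.sub (integrable_const _)) (hIntmax _ hIntY1 _ 0)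
        (fun ω => le_max_left _ _)
    exact le_trans (le_min (by linarith) h3) hE1
  exact hgoal
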